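/- Let $\varrho \in [0, 1]$ and define $g_\infty(t) := \max(1 + \varrho t, \, \varrho + t)$ for $t \geq 0$. Then for all $t \in (0, 1]$, it holds that $\left(2 - \frac{1}{t}\right) g_\infty(t) + \left(\frac{1}{t} - 1\right) g_\infty(2t) \leq 4 - 2\sqrt{2} + 2\varrho(\sqrt{2} - 1)$, with equality at $t = \frac{1}{\sqrt{2}}$. -/

import Mathlib

theorem stmt_19 (ρ : ℝ) (hρ : ρ ∈ Set.Icc (0:ℝ) 1) :
    (∀ t ∈ Set.Ioc (0:ℝ) 1,
      (2 - 1 / t) * max (1 + ρ * t) (ρ + t)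
          + (1 / t - 1) * max (1 + ρ * (2 * t)) (ρ + 2 * t)
        ≤ 4 - 2 * Real.sqrt 2 + 2 * ρ * (Real.sqrt 2 - 1)) ∧
    (2 - 1 / (1 / Real.sqrt 2)) * max (1 + ρ * (1 / Real.sqrt 2)) (ρ + 1 / Real.sqrt 2)
        + (1 / (1 / Real.sqrt 2) - 1)
          * max (1 + ρ * (2 * (1 / Real.sqrt 2))) (ρ + 2 * (1 / Real.sqrt 2))
      = 4 - 2 * Real.sqrt 2 + 2 * ρ * (Real.sqrt 2 - 1) := by
  obtain ⟨h0, h1⟩ := hρ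
  have hs : Real.sqrt 2 ^ 2 = 2 := Real.sq_sqrt (by norm_num)
  have hs0 : (0:ℝ) < Real.sqrt 2 := Real.sqrt_pos.mpr (by norm_num)
  have hs1 : (1:ℝ) < Real.sqrt 2 := by nlinarith
  have hs2 : Real.sqrt 2 < 3/2 := by nlinarith
  constructor
  · intro t ht
    obtain ⟨ht0, ht1⟩ := ht
    have ht0' : t ≠ 0 := ne_of_gt ht0
    have hmax1 : max (1 + ρ * t) (ρ + t) = 1 + ρ * t := by
      apply max_eq_left; nlinarith
    rw [hmax1]
    rcases le_or_gt (2 * t) 1 with h2 | h2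
    · have hmax2 : max (1 + ρ * (2 * t)) (ρ + 2 * t) = 1 + ρ * (2 * t) := by
        apply max_eq_left; nlinarith
      rw [hmax2]
      have key : (2 - 1 / t) * (1 + ρ * t) + (1 / t - 1) * (1 + ρ * (2 * t)) = 1 + ρ := by
        field_simp; ring
      rw [key]
      nlinarith
    · have hmax2 : max (1 + ρ * (2 * t)) (ρ + 2 * t) = ρ + 2 * t := by
        apply max_eq_right; nlinarith
      rw [hmax2]
      have key : (2 - 1 / t) * (1 + ρ * t) + (1 / t - 1) * (ρ + 2 * t)
          = 4 - 2 * ρ - (1 - ρ) * (2 * t + 1 / t) := by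
        field_simp; ring
      rw [key]
      have hkey2 : 2 * Real.sqrt 2 ≤ 2 * t + 1 / t := by
        rw [← sub_nonneg]
        have : 2 * t + 1 / t - 2 * Real.sqrt 2 = (Real.sqrt 2 * t - 1) ^ 2 / t := by
          field_simp; nlinarith [sq_nonneg t]
        rw [this]; positivity
      nlinarith [mul_le_mul_of_nonneg_left hkey2 (by linarith : (0:ℝ) ≤ 1 - ρ)]
  · have hmax1 : max (1 + ρ * (1 / Real.sqrt 2)) (ρ + 1 / Real.sqrt 2)
        = 1 + ρ * (1 / Real.sqrt 2) := by
      apply max_eq_left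
      rw [← sub_nonneg]
      have h : 1 + ρ * (1 / Real.sqrt 2) - (ρ + 1 / Real.sqrt 2)
          = (1 - ρ) * (1 - 1 / Real.sqrt 2) := by ring
      rw [h]
      have : 1 / Real.sqrt 2 ≤ 1 := by
        rw [div_le_one hs0]; linarith
      apply mul_nonneg <;> linarith
    have hmax2 : max (1 + ρ * (2 * (1 / Real.sqrt 2))) (ρ + 2 * (1 / Real.sqrt 2))
        = ρ + 2 * (1 / Real.sqrt 2) := by
      apply max_eq_right
      rw [← sub_nonneg]
      have h2 : 2 * (1 / Real.sqrt 2) = Real.sqrt 2 := by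
        field_simp
        exact hs.symm
      rw [h2]
      have h : ρ + Real.sqrt 2 - (1 + ρ * Real.sqrt 2) = (1 - ρ) * (Real.sqrt 2 - 1) := by ring
      rw [h]
      apply mul_nonneg <;> linarith
    rw [hmax1, hmax2]
    have hne : Real.sqrt 2 ≠ 0 := ne_of_gt hs0
    field_simp
    ring_nf
    nlinarith [hs]
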